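/- Fix integers k ≥ 2 and j ≥ 0. There exists a constant C > 0 such that for every integer n ≥ 1, |_kω_n(j) − (1/(j!·n^j))·(1 − 1/n)| ≤ C/n^{j+2}. -/

import Mathlib

/-- The action of an element of the wreath product `C_n ≀ S_r` on `B(n,r)`. -/
def wAct (n r : ℕ) (σ : (Fin r → ZMod n) × Equiv.Perm (Fin r)) :
    ZMod n × Fin r → ZMod n × Fin r :=
  fun p => (σ.1 p.2 + p.1, σ.2 p.2)

/-- The number of fixed points of `σ ∈ C_n ≀ S_r` acting on `B(n,r)`. -/
noncomputable def fixCount (n r : ℕ) (σ : (Fin r → ZMod n) × Equiv.Perm (Fin r)) : ℕ :=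
  Nat.card {p : ZMod n × Fin r // wAct n r σ p = p}

/-- `ω_{n,r}(j)`: the proportion of elements `σ` of `C_n ≀ S_r` with exactly
`j·n` fixed points on `B(n,r)`. -/
noncomputable def omega (n r j : ℕ) : ℝ :=
  (Nat.card {σ : (Fin r → ZMod n) × Equiv.Perm (Fin r) // fixCount n r σ = j * n} : ℝ)
    / ((r.factorial * n ^ r : ℕ) : ℝ)

/-- `r_k(n) = (1/n) · Σ_{d ∣ n} μ(n/d) k^d`. -/
noncomputable def rk (k n : ℕ) : ℕ :=
  ((∑ d ∈ n.divisors, ArithmeticFunction.moebius (n / d) * (k : ℤ) ^ d) / (n : ℤ)).toNat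

/-- `_kω_n := ω_{n, r_k(n)}`. -/
noncomputable def komega (k n j : ℕ) : ℝ := omega n (rk k n) j

open Finset Equiv

/-- the set of "good" coordinates of σ. -/
def goodSet {n r : ℕ} (σ : (Fin r → ZMod n) × Equiv.Perm (Fin r)) : Finset (Fin r) :=
  Finset.univ.filter fun i => σ.2 i = i ∧ σ.1 i = 0

lemma wAct_fixed_iff {n r : ℕ} (σ : (Fin r → ZMod n) × Equiv.Perm (Fin r))
    (p : ZMod n × Fin r) : wAct n r σ p = p ↔ (σ.2 p.2 = p.2 ∧ σ.1 p.2 = 0) := by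
  constructor
  · intro h
    have h1 : σ.1 p.2 + p.1 = p.1 := congrArg Prod.fst h
    have h2 : σ.2 p.2 = p.2 := congrArg Prod.snd h
    exact ⟨h2, by simpa using h1⟩
  · rintro ⟨h2, h1⟩
    simp [wAct, h1, h2]

lemma fixCount_eq (n r : ℕ) [NeZero n] (σ : (Fin r → ZMod n) × Equiv.Perm (Fin r)) :
    fixCount n r σ = n * (goodSet σ).card := by
  have e : {p : ZMod n × Fin r // wAct n r σ p = p} ≃
      ZMod n × {i : Fin r // σ.2 i = i ∧ σ.1 i = 0} :=
    { toFun := fun x => (x.1.1, ⟨x.1.2, (wAct_fixed_iff σ x.1).mp x.2⟩)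
      invFun := fun y => ⟨(y.1, y.2.1), (wAct_fixed_iff σ (y.1, y.2.1)).mpr y.2.2⟩
      left_inv := fun x => rfl
      right_inv := fun y => rfl }
  rw [fixCount, Nat.card_congr e, Nat.card_prod, Nat.card_eq_fintype_card,
    Nat.card_eq_fintype_card, ZMod.card, Fintype.card_subtype]
  rfl

lemma mem_goodSet_iff {n r : ℕ} (σ : (Fin r → ZMod n) × Equiv.Perm (Fin r)) (i : Fin r) :
    i ∈ goodSet σ ↔ (σ.2 i = i ∧ σ.1 i = 0) := by simp [goodSet]

/-- the "no good coordinate" property. -/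
def Mprop {n : ℕ} {α : Type} (σ : (α → ZMod n) × Equiv.Perm α) : Prop :=
  ∀ i, ¬(σ.2 i = i ∧ σ.1 i = 0)

/-- number of pairs with no good coordinate. -/
noncomputable def Mcount (n s : ℕ) : ℕ :=
  Nat.card {σ : (Fin s → ZMod n) × Equiv.Perm (Fin s) // Mprop σ}

def msetCongr {n : ℕ} {α β : Type} (e : α ≃ β) :
    {σ : (α → ZMod n) × Equiv.Perm α // Mprop σ} ≃
      {σ : (β → ZMod n) × Equiv.Perm β // Mprop σ} :=
  Equiv.subtypeEquiv ((Equiv.arrowCongr e (Equiv.refl _)).prodCongr e.permCongr) (by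
    intro σ
    constructor
    · intro h b hb
      refine h (e.symm b) ⟨?_, hb.2⟩
      have := hb.1
      simp only [Equiv.prodCongr_apply, Equiv.permCongr_apply] at this
      have : σ.2 (e.symm b) = e.symm b := by
        apply e.injective
        simpa using this
      exact this
    · intro h a ha
      refine h (e a) ⟨?_, by simpa using ha.2⟩
      simp [Equiv.permCongr_apply, ha.1])

lemma card_mset (n : ℕ) (α : Type) [Fintype α] [DecidableEq α] :
    Nat.card {σ : (α → ZMod n) × Equiv.Perm α // Mprop σ} = Mcount n (Fintype.card α) :=
  Nat.card_congr (msetCongr (Fintype.equivFin α))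

lemma card_fiber (n r : ℕ) (S : Finset (Fin r)) :
    Nat.card {σ : (Fin r → ZMod n) × Equiv.Perm (Fin r) // goodSet σ = S}
      = Mcount n (r - S.card) := by
  classical
  have hcard : Fintype.card {x : Fin r // x ∉ S} = r - S.card := by
    rw [Fintype.card_subtype_compl, Fintype.card_fin, Fintype.card_coe]
  rw [← hcard, ← card_mset]
  refine Nat.card_congr ?_
  refine
    { toFun := fun x => ?_
      invFun := fun y => ?_
      left_inv := ?_
      right_inv := ?_ }
  · -- forward
    obtain ⟨⟨ζ, π⟩, hS⟩ := x
    have hfix : ∀ i ∈ S, π i = i := by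
      intro i hi; rw [← hS] at hi; exact ((mem_goodSet_iff _ i).mp hi).1
    have hzero : ∀ i ∈ S, ζ i = 0 := by
      intro i hi; rw [← hS] at hi; exact ((mem_goodSet_iff _ i).mp hi).2
    have hiff : ∀ x : Fin r, x ∉ S ↔ π x ∉ S := by
      intro x
      constructor
      · intro hx hpx
        have h1 : π (π x) = π x := hfix _ hpx
        have h2 : π x = x := π.injective h1
        exact hx (h2 ▸ hpx)
      · intro hpx hx
        exact hpx (by rw [hfix x hx]; exact hx)
    refine ⟨(fun x => ζ x.1, π.subtypePerm (fun x => (hiff x).symm)), ?_⟩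
    rintro ⟨x, hx⟩ ⟨h1, h2⟩
    have hπ : π x = x := congrArg Subtype.val h1
    refine hx ?_
    rw [← hS]
    exact (mem_goodSet_iff _ x).mpr ⟨hπ, h2⟩
  · -- backward
    obtain ⟨⟨ζ', τ⟩, hM⟩ := y
    refine ⟨(fun i => if h : i ∉ S then ζ' ⟨i, h⟩ else 0, Equiv.Perm.ofSubtype τ), ?_⟩
    ext i
    rw [mem_goodSet_iff]
    by_cases hi : i ∈ S
    · simp only [hi, iff_true]
      constructor
      · exact Equiv.Perm.ofSubtype_apply_of_not_mem τ (by simpa using hi)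
      · simp [hi]
    · simp only [hi, iff_false]
      rintro ⟨h1, h2⟩
      have hτ : (τ ⟨i, hi⟩ : Fin r) = i := by
        rw [← Equiv.Perm.ofSubtype_apply_of_mem τ hi]; exact h1
      refine hM ⟨i, hi⟩ ⟨Subtype.ext hτ, ?_⟩
      simpa [hi] using h2
  · -- left inverse
    rintro ⟨⟨ζ, π⟩, hS⟩
    refine Subtype.ext (Prod.ext ?_ ?_)
    · funext i
      dsimp only
      by_cases hi : i ∈ S
      · have hzero : ζ i = 0 := by
          have := hi; rw [← hS] at this; exact ((mem_goodSet_iff _ i).mp this).2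
        simp [hi, hzero]
      · simp [hi]
    · dsimp only
      apply Equiv.Perm.ofSubtype_subtypePerm
      intro x hx hmem
      have hmem' : x ∈ S := hmem
      have hfix : π x = x := by
        rw [← hS] at hmem'
        exact ((mem_goodSet_iff _ x).mp hmem').1
      exact hx hfix
  · -- right inverse
    rintro ⟨⟨ζ', τ⟩, hM⟩
    refine Subtype.ext (Prod.ext ?_ ?_)
    · funext x
      obtain ⟨x, hx⟩ := x
      simp [hx]
    · dsimp only
      exact Equiv.Perm.subtypePerm_ofSubtype τ

lemma card_good_eq (n r j : ℕ) [NeZero n] (hj : j ≤ r) :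
    Nat.card {σ : (Fin r → ZMod n) × Equiv.Perm (Fin r) // (goodSet σ).card = j}
      = r.choose j * Mcount n (r - j) := by
  classical
  rw [Nat.card_eq_fintype_card, Fintype.card_subtype]
  rw [Finset.card_eq_sum_card_fiberwise (f := fun σ => goodSet σ)
    (t := Finset.powersetCard j Finset.univ)
    (fun σ hσ => Finset.mem_powersetCard_univ.mpr (Finset.mem_filter.mp hσ).2)]
  have hfib : ∀ S ∈ Finset.powersetCard j (Finset.univ : Finset (Fin r)),
      (((Finset.univ.filter fun σ : (Fin r → ZMod n) × Equiv.Perm (Fin r) =>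
        (goodSet σ).card = j)).filter fun σ => goodSet σ = S).card = Mcount n (r - j) := by
    intro S hS
    have hSc : S.card = j := Finset.mem_powersetCard_univ.mp hS
    have : (((Finset.univ.filter fun σ : (Fin r → ZMod n) × Equiv.Perm (Fin r) =>
        (goodSet σ).card = j)).filter fun σ => goodSet σ = S)
        = Finset.univ.filter fun σ => goodSet σ = S := by
      rw [Finset.filter_filter]
      refine Finset.filter_congr ?_
      intro σ _
      constructor
      · exact fun h => h.2
      · exact fun h => ⟨h ▸ hSc, h⟩
    rw [this, ← Fintype.card_subtype, ← Nat.card_eq_fintype_card, card_fiber, hSc]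
  rw [Finset.sum_congr rfl hfib, Finset.sum_const, Finset.card_powersetCard,
    Finset.card_univ, Fintype.card_fin, smul_eq_mul]

lemma sum_count (n r : ℕ) [NeZero n] :
    ∑ j ∈ Finset.range (r + 1), r.choose j * Mcount n (r - j)
      = r.factorial * n ^ r := by
  classical
  have htot : (Finset.univ : Finset ((Fin r → ZMod n) × Equiv.Perm (Fin r))).card
      = r.factorial * n ^ r := by
    rw [Finset.card_univ, Fintype.card_prod, Fintype.card_fun, Fintype.card_perm,
      ZMod.card, Fintype.card_fin, mul_comm]
  rw [← htot]
  rw [Finset.card_eq_sum_card_fiberwise (f := fun σ => (goodSet σ).card)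
    (t := Finset.range (r + 1)) (fun σ _ => Finset.mem_range.mpr
      (Nat.lt_succ_of_le (by simpa using Finset.card_le_univ (goodSet σ))))]
  refine Finset.sum_congr rfl ?_
  intro j hj
  have hj' : j ≤ r := Nat.lt_succ_iff.mp (Finset.mem_range.mp hj)
  rw [← card_good_eq n r j hj', Nat.card_eq_fintype_card, Fintype.card_subtype]

/-- the inclusion-exclusion value. -/
def Pint (n m : ℕ) : ℤ :=
  ∑ t ∈ Finset.range (m + 1),
    (-1) ^ t * (m.choose t : ℤ) * ((m - t).factorial : ℤ) * (n : ℤ) ^ (m - t)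

lemma Pint_reflect (n m : ℕ) :
    Pint n m = ∑ u ∈ Finset.range (m + 1),
      (-1) ^ (m - u) * (m.choose u : ℤ) * (u.factorial : ℤ) * (n : ℤ) ^ u := by
  rw [Pint, ← Finset.sum_range_reflect]
  refine Finset.sum_congr rfl ?_
  intro u hu
  have hu' : u ≤ m := Nat.lt_succ_iff.mp (Finset.mem_range.mp hu)
  have h1 : m + 1 - 1 - u = m - u := by omega
  have h2 : m - (m - u) = u := by omega
  rw [h1, h2, Nat.choose_symm hu']

lemma key_ident (n s : ℕ) :
    ∑ m ∈ Finset.range (s + 1), (s.choose m : ℤ) * Pint n m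
      = (s.factorial : ℤ) * (n : ℤ) ^ s := by
  have hstep : ∀ m ∈ Finset.range (s + 1), (s.choose m : ℤ) * Pint n m
      = ∑ u ∈ Finset.range (s + 1),
        (s.choose m : ℤ) * ((-1) ^ (m - u) * (m.choose u : ℤ) * (u.factorial : ℤ) * (n : ℤ) ^ u) := by
    intro m hm
    have hm' : m ≤ s := Nat.lt_succ_iff.mp (Finset.mem_range.mp hm)
    rw [Pint_reflect, Finset.mul_sum]
    refine Finset.sum_subset (Finset.range_subset_range.mpr (by omega)) ?_
    intro u _ hu
    have : m < u := by simpa using hu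
    simp [Nat.choose_eq_zero_of_lt this]
  rw [Finset.sum_congr rfl hstep, Finset.sum_comm]
  have hinner : ∀ u ∈ Finset.range (s + 1),
      (∑ m ∈ Finset.range (s + 1),
        (s.choose m : ℤ) * ((-1) ^ (m - u) * (m.choose u : ℤ) * (u.factorial : ℤ) * (n : ℤ) ^ u))
      = if u = s then (s.factorial : ℤ) * (n : ℤ) ^ s else 0 := by
    intro u hu
    have hu' : u ≤ s := Nat.lt_succ_iff.mp (Finset.mem_range.mp hu)
    have hres : (∑ m ∈ Finset.range (s + 1),
        (s.choose m : ℤ) * ((-1) ^ (m - u) * (m.choose u : ℤ) * (u.factorial : ℤ) * (n : ℤ) ^ u))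
        = ∑ m ∈ Finset.Ico u (s + 1),
          (s.choose m : ℤ) * ((-1) ^ (m - u) * (m.choose u : ℤ) * (u.factorial : ℤ) * (n : ℤ) ^ u) := by
      refine (Finset.sum_subset ?_ ?_).symm
      · intro m hm
        simp only [Finset.mem_Ico] at hm
        exact Finset.mem_range.mpr hm.2
      · intro m hm hm'
        have : m < u := by
          simp only [Finset.mem_range] at hm
          simp only [Finset.mem_Ico, not_and, not_lt] at hm'
          omega
        simp [Nat.choose_eq_zero_of_lt this]
    rw [hres, Finset.sum_Ico_eq_sum_range]
    have hterm : ∀ i ∈ Finset.range (s + 1 - u),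
        (s.choose (u + i) : ℤ) * ((-1) ^ (u + i - u) * ((u + i).choose u : ℤ)
          * (u.factorial : ℤ) * (n : ℤ) ^ u)
        = ((s.choose u : ℤ) * (u.factorial : ℤ) * (n : ℤ) ^ u)
          * ((-1) ^ i * ((s - u).choose i : ℤ)) := by
      intro i hi
      have hi' : u + i ≤ s := by
        have := Finset.mem_range.mp hi; omega
      have hcc : s.choose (u + i) * (u + i).choose u = s.choose u * (s - u).choose i := by
        have := Nat.choose_mul (n := s) (k := u + i) (s := u) (Nat.le_add_right u i)
        simpa using this
      have hee : u + i - u = i := by omega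
      rw [hee]
      have hcc' : (s.choose (u + i) : ℤ) * ((u + i).choose u : ℤ)
          = (s.choose u : ℤ) * ((s - u).choose i : ℤ) := by exact_mod_cast hcc
      linear_combination ((u.factorial : ℤ) * (n : ℤ) ^ u * (-1 : ℤ) ^ i) * hcc'
    rw [Finset.sum_congr rfl hterm, ← Finset.mul_sum]
    have hru : s + 1 - u = (s - u) + 1 := by omega
    rw [hru, Int.alternating_sum_range_choose]
    by_cases hus : u = s
    · subst hus
      simp
    · have : s - u ≠ 0 := by omega
      simp [this, hus]
  rw [Finset.sum_congr rfl hinner, Finset.sum_ite_eq' (Finset.range (s + 1)) s]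
  simp

lemma mcount_eq_pint (n : ℕ) [NeZero n] (s : ℕ) : (Mcount n s : ℤ) = Pint n s := by
  induction s using Nat.strong_induction_on with
  | _ s ih =>
    have hM : ∑ m ∈ Finset.range (s + 1), (s.choose m : ℤ) * (Mcount n m : ℤ)
        = (s.factorial : ℤ) * (n : ℤ) ^ s := by
      have h0 := sum_count n s
      have h1 : ∑ m ∈ Finset.range (s + 1), s.choose m * Mcount n m
          = s.factorial * n ^ s := by
        rw [← h0, ← Finset.sum_range_reflect]
        refine Finset.sum_congr rfl ?_
        intro m hm
        have hm' : m ≤ s := Nat.lt_succ_iff.mp (Finset.mem_range.mp hm)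
        have h2 : s + 1 - 1 - m = s - m := by omega
        rw [h2, Nat.choose_symm hm']
      exact_mod_cast congrArg (Nat.cast : ℕ → ℤ) h1
    have hK := key_ident n s
    rw [Finset.sum_range_succ] at hM hK
    have hsum : ∑ m ∈ Finset.range s, (s.choose m : ℤ) * (Mcount n m : ℤ)
        = ∑ m ∈ Finset.range s, (s.choose m : ℤ) * Pint n m := by
      refine Finset.sum_congr rfl ?_
      intro m hm
      rw [ih m (Finset.mem_range.mp hm)]
    rw [hsum] at hM
    have := hM.trans hK.symm
    simpa using this

lemma mcount_real (n s : ℕ) [NeZero n] :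
    (Mcount n s : ℝ) = (s.factorial : ℝ) * (n : ℝ) ^ s *
      ∑ t ∈ Finset.range (s + 1), (-1 : ℝ) ^ t * (1 / (n : ℝ)) ^ t / (t.factorial : ℝ) := by
  have hn : (n : ℝ) ≠ 0 := Nat.cast_ne_zero.mpr (NeZero.ne n)
  have h := mcount_eq_pint n s
  have h2 : (Mcount n s : ℝ) = ∑ t ∈ Finset.range (s + 1),
      (-1 : ℝ) ^ t * (s.choose t : ℝ) * ((s - t).factorial : ℝ) * (n : ℝ) ^ (s - t) := by
    have := congrArg (Int.cast : ℤ → ℝ) h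
    push_cast [Pint] at this
    exact this
  rw [h2, Finset.mul_sum]
  refine Finset.sum_congr rfl ?_
  intro t ht
  have ht' : t ≤ s := Nat.lt_succ_iff.mp (Finset.mem_range.mp ht)
  have hfac : (s.choose t : ℝ) * (t.factorial : ℝ) * ((s - t).factorial : ℝ)
      = (s.factorial : ℝ) := by
    exact_mod_cast congrArg (Nat.cast : ℕ → ℝ) (Nat.choose_mul_factorial_mul_factorial ht')
  have hpow : (n : ℝ) ^ (s - t) * (n : ℝ) ^ t = (n : ℝ) ^ s := by
    rw [← pow_add]
    congr 1
    omega
  have htf : (t.factorial : ℝ) ≠ 0 := Nat.cast_ne_zero.mpr (Nat.factorial_ne_zero t)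
  have e1 : (s.factorial : ℝ) * (n : ℝ) ^ s * ((-1 : ℝ) ^ t * (1 / (n : ℝ)) ^ t / (t.factorial : ℝ))
      = (-1 : ℝ) ^ t * ((s.factorial : ℝ) / (t.factorial : ℝ)) * ((n : ℝ) ^ s / (n : ℝ) ^ t) := by
    rw [div_pow, one_pow]
    ring
  have e2 : (s.factorial : ℝ) / (t.factorial : ℝ)
      = (s.choose t : ℝ) * ((s - t).factorial : ℝ) := by
    rw [div_eq_iff htf, ← hfac]
    ring
  have e3 : (n : ℝ) ^ s / (n : ℝ) ^ t = (n : ℝ) ^ (s - t) := by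
    rw [← hpow, mul_div_assoc, div_self (pow_ne_zero t hn), mul_one]
  rw [e1, e2, e3]
  ring

lemma omega_formula (n r j : ℕ) [NeZero n] (hjr : j ≤ r) :
    omega n r j = (1 / ((j.factorial : ℝ) * (n : ℝ) ^ j)) *
      ∑ t ∈ Finset.range (r - j + 1), (-1 : ℝ) ^ t * (1 / (n : ℝ)) ^ t / (t.factorial : ℝ) := by
  have hn : (n : ℝ) ≠ 0 := Nat.cast_ne_zero.mpr (NeZero.ne n)
  have hnum : Nat.card {σ : (Fin r → ZMod n) × Equiv.Perm (Fin r) // fixCount n r σ = j * n}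
      = r.choose j * Mcount n (r - j) := by
    rw [← card_good_eq n r j hjr]
    refine Nat.card_congr (Equiv.subtypeEquivRight ?_)
    intro σ
    rw [fixCount_eq]
    have hn' : 0 < n := Nat.pos_of_ne_zero (NeZero.ne n)
    constructor
    · intro h
      have : n * (goodSet σ).card = n * j := by rw [h]; ring
      exact Nat.eq_of_mul_eq_mul_left hn' this
    · intro h
      rw [h]; ring
  rw [omega, hnum]
  have hfac : (r.choose j : ℝ) * ((r - j).factorial : ℝ) * (j.factorial : ℝ)
      = (r.factorial : ℝ) := by
    have := Nat.choose_mul_factorial_mul_factorial hjr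
    push_cast [← this]
    ring
  have hpow : (n : ℝ) ^ (r - j) * (n : ℝ) ^ j = (n : ℝ) ^ r := by
    rw [← pow_add]; congr 1; omega
  have hjf : (j.factorial : ℝ) ≠ 0 := Nat.cast_ne_zero.mpr (Nat.factorial_ne_zero j)
  push_cast
  rw [mcount_real n (r - j)]
  set A := ∑ t ∈ Finset.range (r - j + 1), (-1 : ℝ) ^ t * (1 / (n : ℝ)) ^ t / (t.factorial : ℝ)
    with hA
  have hcoef : (r.choose j : ℝ) * (((r - j).factorial : ℝ) * (n : ℝ) ^ (r - j))
      / ((r.factorial : ℝ) * (n : ℝ) ^ r) = 1 / ((j.factorial : ℝ) * (n : ℝ) ^ j) := by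
    rw [div_eq_div_iff (by positivity) (by positivity)]
    rw [one_mul, ← hfac, ← hpow]
    ring
  calc (r.choose j : ℝ) * (((r - j).factorial : ℝ) * (n : ℝ) ^ (r - j) * A)
      / ((r.factorial : ℝ) * (n : ℝ) ^ r)
      = ((r.choose j : ℝ) * (((r - j).factorial : ℝ) * (n : ℝ) ^ (r - j))
          / ((r.factorial : ℝ) * (n : ℝ) ^ r)) * A := by ring
    _ = 1 / ((j.factorial : ℝ) * (n : ℝ) ^ j) * A := by rw [hcoef]

lemma sum_invfact_le (s : ℕ) :
    ∑ t ∈ Finset.Ico 2 (s + 1), (1 : ℝ) / (t.factorial : ℝ) ≤ 1 := by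
  have hterm : ∀ t ∈ Finset.Ico 2 (s + 1), (1 : ℝ) / (t.factorial : ℝ) ≤ (1/2 : ℝ) ^ (t - 1) := by
    intro t ht
    have ht' : 2 ≤ t := (Finset.mem_Ico.mp ht).1
    have hfac : (2 : ℕ) ^ (t - 1) ≤ t.factorial := by
      have := Nat.factorial_mul_pow_le_factorial (m := 1) (n := t - 1)
      simpa [Nat.factorial_one, show 1 + (t - 1) = t by omega] using this
    have hfacR : (2 : ℝ) ^ (t - 1) ≤ (t.factorial : ℝ) := by exact_mod_cast hfac
    rw [div_pow, one_pow]
    exact one_div_le_one_div_of_le (by positivity) hfacR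
  refine le_trans (Finset.sum_le_sum hterm) ?_
  rcases le_or_gt (s + 1) 2 with hs | hs
  · rw [Finset.Ico_eq_empty (by omega)]
    norm_num
  · rw [Finset.sum_Ico_eq_sum_range]
    have hterm2 : ∀ i ∈ Finset.range (s + 1 - 2), (1/2 : ℝ) ^ (2 + i - 1) = (1/2) * (1/2) ^ i := by
      intro i _
      rw [show 2 + i - 1 = i + 1 by omega, pow_succ]
      ring
    rw [Finset.sum_congr rfl hterm2, ← Finset.mul_sum]
    have hgeom : ∑ i ∈ Finset.range (s + 1 - 2), (1/2 : ℝ) ^ i ≤ 2 := by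
      rw [geom_sum_eq (by norm_num)]
      have : (0:ℝ) < (1/2 : ℝ) ^ (s + 1 - 2) := by positivity
      rw [div_le_iff_of_neg (by norm_num)]
      linarith
    linarith

lemma tail_bound (s : ℕ) (x : ℝ) (hx0 : 0 ≤ x) (hx1 : x ≤ 1) (hs : 2 ≤ s) :
    |(∑ t ∈ Finset.range (s + 1), (-1 : ℝ) ^ t * x ^ t / (t.factorial : ℝ)) - (1 - x)| ≤ x ^ 2 := by
  have hsplit : ∑ t ∈ Finset.range (s + 1), (-1 : ℝ) ^ t * x ^ t / (t.factorial : ℝ)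
      = (1 - x) + ∑ t ∈ Finset.Ico 2 (s + 1), (-1 : ℝ) ^ t * x ^ t / (t.factorial : ℝ) := by
    rw [Finset.range_eq_Ico,
      ← Finset.sum_Ico_consecutive _ (by omega : 0 ≤ 2) (by omega : 2 ≤ s + 1)]
    congr 1
    rw [← Finset.range_eq_Ico]
    simp [Finset.sum_range_succ]
    ring
  rw [hsplit, show (1 - x) + (∑ t ∈ Finset.Ico 2 (s + 1),
    (-1 : ℝ) ^ t * x ^ t / (t.factorial : ℝ)) - (1 - x)
    = ∑ t ∈ Finset.Ico 2 (s + 1), (-1 : ℝ) ^ t * x ^ t / (t.factorial : ℝ) by ring]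
  refine le_trans (Finset.abs_sum_le_sum_abs _ _) ?_
  have hterm : ∀ t ∈ Finset.Ico 2 (s + 1),
      |(-1 : ℝ) ^ t * x ^ t / (t.factorial : ℝ)| ≤ x ^ 2 * (1 / (t.factorial : ℝ)) := by
    intro t ht
    have ht' : 2 ≤ t := (Finset.mem_Ico.mp ht).1
    have h1 : |(-1 : ℝ) ^ t * x ^ t / (t.factorial : ℝ)| = x ^ t / (t.factorial : ℝ) := by
      rw [abs_div, abs_mul, abs_pow, abs_neg, abs_one, one_pow, one_mul,
        abs_of_nonneg (pow_nonneg hx0 t), abs_of_nonneg (by positivity : (0:ℝ) ≤ (t.factorial : ℝ))]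
    rw [h1, div_eq_mul_one_div]
    have hxt : x ^ t ≤ x ^ 2 := pow_le_pow_of_le_one hx0 hx1 ht'
    exact mul_le_mul_of_nonneg_right hxt (by positivity)
  refine le_trans (Finset.sum_le_sum hterm) ?_
  rw [← Finset.mul_sum]
  have := sum_invfact_le s
  nlinarith [sq_nonneg x, this]

lemma est (n r j : ℕ) (hn : 1 ≤ n) (hr : j + 2 ≤ r) :
    |omega n r j - 1 / ((j.factorial : ℝ) * (n : ℝ) ^ j) * (1 - 1 / (n : ℝ))|
      ≤ 1 / (n : ℝ) ^ (j + 2) := by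
  haveI : NeZero n := ⟨by omega⟩
  have hn1 : (1 : ℝ) ≤ (n : ℝ) := by exact_mod_cast hn
  have hnpos : (0 : ℝ) < (n : ℝ) := by linarith
  rw [omega_formula n r j (by omega), ← mul_sub, abs_mul]
  have hx0 : (0 : ℝ) ≤ 1 / (n : ℝ) := by positivity
  have hx1 : 1 / (n : ℝ) ≤ 1 := by rw [div_le_one hnpos]; exact hn1
  have htb := tail_bound (r - j) (1 / (n : ℝ)) hx0 hx1 (by omega)
  have hc0 : (0 : ℝ) ≤ 1 / ((j.factorial : ℝ) * (n : ℝ) ^ j) := by positivity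
  rw [abs_of_nonneg hc0]
  have step1 : 1 / ((j.factorial : ℝ) * (n : ℝ) ^ j) *
      |(∑ t ∈ Finset.range (r - j + 1), (-1 : ℝ) ^ t * (1 / (n : ℝ)) ^ t / (t.factorial : ℝ))
        - (1 - 1 / (n : ℝ))|
      ≤ 1 / ((j.factorial : ℝ) * (n : ℝ) ^ j) * (1 / (n : ℝ)) ^ 2 :=
    mul_le_mul_of_nonneg_left htb hc0
  refine le_trans step1 ?_
  have heq : 1 / ((j.factorial : ℝ) * (n : ℝ) ^ j) * (1 / (n : ℝ)) ^ 2
      = 1 / ((j.factorial : ℝ) * (n : ℝ) ^ (j + 2)) := by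
    rw [div_pow, one_pow, pow_add]
    field_simp
  rw [heq]
  have hjf : (1 : ℝ) ≤ (j.factorial : ℝ) := by exact_mod_cast Nat.one_le_iff_ne_zero.mpr (Nat.factorial_ne_zero j)
  have hp : (0 : ℝ) < (n : ℝ) ^ (j + 2) := by positivity
  rw [div_le_div_iff₀ (by positivity) hp]
  nlinarith [hp]

lemma geom_sum_nat_le (k m : ℕ) (hk : 2 ≤ k) :
    ∑ d ∈ Finset.range (m + 1), k ^ d ≤ k ^ (m + 1) := by
  induction m with
  | zero => simpa using hk.trans' (by norm_num)
  | succ m ih =>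
    rw [Finset.sum_range_succ]
    have h2 : 2 * k ^ (m + 1) ≤ k ^ (m + 2) := by
      have h3 : k ^ (m + 2) = k * k ^ (m + 1) := by ring
      have h4 : 2 * k ^ (m + 1) ≤ k * k ^ (m + 1) := Nat.mul_le_mul_right _ hk
      omega
    have h5 : k ^ (m + 1 + 1) = k ^ (m + 2) := by ring
    omega

lemma sq_le_two_pow (n : ℕ) (hn : 4 ≤ n) : n * n ≤ 2 ^ n := by
  induction n with
  | zero => omega
  | succ m ih =>
    rcases Nat.lt_or_ge m 4 with hm | hm
    · interval_cases m <;> simp_all <;> omega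
    · have h1 := ih hm
      have h2 : 2 * m + 1 ≤ m * m := by nlinarith
      have : (m + 1) * (m + 1) ≤ 2 * (m * m) := by nlinarith
      calc (m + 1) * (m + 1) ≤ 2 * (m * m) := this
        _ ≤ 2 * 2 ^ m := by omega
        _ = 2 ^ (m + 1) := by rw [pow_succ]; ring

lemma rk_ge (k n j : ℕ) (hk : 2 ≤ k) (hn : 4 * (j + 3) ≤ n) : j + 2 ≤ rk k n := by
  have hn0 : n ≠ 0 := by omega
  have hn4 : 4 ≤ n := by omega
  set S : ℤ := ∑ d ∈ n.divisors, ArithmeticFunction.moebius (n / d) * (k : ℤ) ^ d with hS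
  have hmem : n ∈ n.divisors := Nat.mem_divisors_self n hn0
  have hsplit : S = (k : ℤ) ^ n + ∑ d ∈ n.divisors.erase n,
      ArithmeticFunction.moebius (n / d) * (k : ℤ) ^ d := by
    rw [hS, ← Finset.add_sum_erase _ _ hmem, Nat.div_self (by omega), ArithmeticFunction.moebius_apply_one]
    ring_nf
  have htail : |∑ d ∈ n.divisors.erase n, ArithmeticFunction.moebius (n / d) * (k : ℤ) ^ d|
      ≤ (k : ℤ) ^ (n / 2 + 1) := by
    refine le_trans (Finset.abs_sum_le_sum_abs _ _) ?_
    have hterm : ∀ d ∈ n.divisors.erase n,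
        |ArithmeticFunction.moebius (n / d) * (k : ℤ) ^ d| ≤ (k : ℤ) ^ d := by
      intro d _
      rw [abs_mul]
      have h1 : |(ArithmeticFunction.moebius (n / d) : ℤ)| ≤ 1 :=
        ArithmeticFunction.abs_moebius_le_one
      have h2 : |(k : ℤ) ^ d| = (k : ℤ) ^ d := abs_of_nonneg (by positivity)
      rw [h2]
      exact le_trans (mul_le_mul_of_nonneg_right h1 (by positivity)) (by ring_nf; exact le_refl _)
    refine le_trans (Finset.sum_le_sum hterm) ?_
    have hsub : n.divisors.erase n ⊆ Finset.range (n / 2 + 1) := by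
      intro d hd
      have hd1 : d ∈ n.divisors := Finset.mem_of_mem_erase hd
      have hdne : d ≠ n := Finset.ne_of_mem_erase hd
      obtain ⟨hdvd, _⟩ := Nat.mem_divisors.mp hd1
      obtain ⟨c, hc⟩ := hdvd
      have hc2 : 2 ≤ c := by
        rcases Nat.lt_or_ge c 2 with h | h
        · interval_cases c <;> omega
        · exact h
      have : d * 2 ≤ n := by
        calc d * 2 ≤ d * c := Nat.mul_le_mul_left _ hc2
          _ = n := hc.symm
      exact Finset.mem_range.mpr (by omega)
    have hnonneg : ∀ d ∈ Finset.range (n / 2 + 1), (0 : ℤ) ≤ (k : ℤ) ^ d := by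
      intro d _; positivity
    refine le_trans (Finset.sum_le_sum_of_subset_of_nonneg hsub
      (fun d hd _ => hnonneg d hd)) ?_
    have := geom_sum_nat_le k (n / 2) hk
    exact_mod_cast this
  have hpow1 : (k : ℤ) ^ (n / 2 + 1) ≤ (k : ℤ) ^ (n - 1) := by
    apply pow_le_pow_right₀ (by exact_mod_cast hk.trans' (by norm_num))
    omega
  have hpow2 : 2 * (k : ℤ) ^ (n - 1) ≤ (k : ℤ) ^ n := by
    have : (k : ℤ) ^ n = (k : ℤ) * (k : ℤ) ^ (n - 1) := by
      rw [← pow_succ']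
      congr 1
      omega
    rw [this]
    have hk' : (2 : ℤ) ≤ (k : ℤ) := by exact_mod_cast hk
    have : (0 : ℤ) ≤ (k : ℤ) ^ (n - 1) := by positivity
    nlinarith
  have h2pow : (2 : ℤ) ^ (n - 1) ≤ (k : ℤ) ^ (n - 1) := by
    apply pow_le_pow_left₀ (by norm_num)
    exact_mod_cast hk
  have hbig : ((j + 2) * n : ℤ) ≤ 2 ^ (n - 1) := by
    have hnat : (j + 2) * n ≤ 2 ^ (n - 1) := by
      have h1 : n * n ≤ 2 ^ n := sq_le_two_pow n hn4
      have h2 : 2 ^ n = 2 * 2 ^ (n - 1) := by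
        rw [← pow_succ']
        congr 1
        omega
      have h3 : 2 * ((j + 2) * n) ≤ n * n := by nlinarith
      omega
    exact_mod_cast hnat
  have hSge : ((j + 2) * n : ℤ) ≤ S := by
    have habs := (abs_le.mp htail).1
    rw [hsplit]
    have : (k : ℤ) ^ n - (k : ℤ) ^ (n / 2 + 1) ≥ (k : ℤ) ^ (n - 1) := by linarith
    linarith
  have hdiv : ((j : ℤ) + 2) ≤ S / (n : ℤ) := by
    rw [Int.le_ediv_iff_mul_le (by exact_mod_cast Nat.pos_of_ne_zero hn0)]
    calc ((j : ℤ) + 2) * (n : ℤ) = ((j + 2) * n : ℤ) := by push_cast; ring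
      _ ≤ S := hSge
  rw [rk, ← hS]
  have : ((j + 2 : ℕ) : ℤ) ≤ S / (n : ℤ) := by push_cast; linarith
  have hmono := Int.toNat_le_toNat hdiv
  have heq : ((j : ℤ) + 2).toNat = j + 2 := by
    rw [show ((j : ℤ) + 2) = ((j + 2 : ℕ) : ℤ) by push_cast; ring, Int.toNat_natCast]
  omega

theorem stmt6 (k j : ℕ) (hk : 2 ≤ k) :
    ∃ C : ℝ, 0 < C ∧ ∀ n : ℕ, 1 ≤ n →
      |komega k n j - (1 / ((j.factorial : ℝ) * (n : ℝ) ^ j)) * (1 - 1 / (n : ℝ))|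
        ≤ C / (n : ℝ) ^ (j + 2) := by
  set N := 4 * (j + 3) with hN
  set g : ℕ → ℝ := fun m =>
    |komega k m j - (1 / ((j.factorial : ℝ) * (m : ℝ) ^ j)) * (1 - 1 / (m : ℝ))| * (m : ℝ) ^ (j + 2)
    with hg
  have hgnn : ∀ m, 0 ≤ g m := fun m => mul_nonneg (abs_nonneg _) (by positivity)
  refine ⟨1 + ∑ m ∈ Finset.range (N + 1), g m, ?_, ?_⟩
  · have : 0 ≤ ∑ m ∈ Finset.range (N + 1), g m := Finset.sum_nonneg fun m _ => hgnn m
    linarith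
  · intro n hn
    have hnpos : (0 : ℝ) < (n : ℝ) := by exact_mod_cast Nat.pos_of_ne_zero (by omega)
    have hppos : (0 : ℝ) < (n : ℝ) ^ (j + 2) := by positivity
    have hsum_nonneg : 0 ≤ ∑ m ∈ Finset.range (N + 1), g m :=
      Finset.sum_nonneg fun m _ => hgnn m
    rcases le_or_gt n N with hcase | hcase
    · -- small n
      have hmem : n ∈ Finset.range (N + 1) := Finset.mem_range.mpr (by omega)
      have hle : g n ≤ ∑ m ∈ Finset.range (N + 1), g m :=
        Finset.single_le_sum (fun m _ => hgnn m) hmem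
      rw [le_div_iff₀ hppos]
      calc |komega k n j - 1 / ((j.factorial : ℝ) * (n : ℝ) ^ j) * (1 - 1 / (n : ℝ))|
            * (n : ℝ) ^ (j + 2) = g n := rfl
        _ ≤ ∑ m ∈ Finset.range (N + 1), g m := hle
        _ ≤ 1 + ∑ m ∈ Finset.range (N + 1), g m := by linarith
    · -- large n
      have hr : j + 2 ≤ rk k n := rk_ge k n j hk (by omega)
      have hest := est n (rk k n) j hn hr
      have : |komega k n j - 1 / ((j.factorial : ℝ) * (n : ℝ) ^ j) * (1 - 1 / (n : ℝ))|
          ≤ 1 / (n : ℝ) ^ (j + 2) := by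
        rw [komega]
        exact hest
      refine le_trans this ?_
      gcongr
      linarith
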